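/- Let Z be a zero forcing set of A ∈ F^{n×n} with |Z| = k and terminal set T, and let B = (RA)_{T,Z} be the core matrix, where R(b) = b − A·Forcing(A,Z,b). If A is invertible, then B is invertible. -/

import Mathlib

open Matrix

section ZeroForcing

variable {V : Type*}

/-- The blue-coloring closure of the zero forcing process on a directed graph with
edge relation `E`, starting from the initially blue set `Z`:  a blue vertex `u` all of
whose out-neighbors except `v` are already blue forces `v` to become blue. -/
inductive Blue (E : V → V → Prop) (Z : Set V) : V → Prop
  | init {v : V} : v ∈ Z → Blue E Z v
  | force {u v : V} : Blue E Z u → E u v →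
      (∀ w, E u w → w ≠ v → Blue E Z w) → Blue E Z v

/-- `Z` is a zero forcing set if the forcing process colors every vertex blue. -/
def IsZeroForcingSet (E : V → V → Prop) (Z : Set V) : Prop := ∀ v, Blue E Z v

end ZeroForcing

section ForcingAlg

variable {F : Type*} [Field F] {n : ℕ}

/-- The off-diagonal adjacency pattern of a matrix: `u → v` iff `u ≠ v` and `A u v ≠ 0`. -/
def adjOf (A : Matrix (Fin n) (Fin n) F) (u v : Fin n) : Prop := u ≠ v ∧ A u v ≠ 0

/-- A chronological list of forces for the zero forcing set `Z` of `A`:  `π` lists the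
vertices outside `Z` in the order they are forced, and `par u` is the forcing parent of
`u` (the vertex that forces `u`). -/
structure ForcingOrder (A : Matrix (Fin n) (Fin n) F) (Z : Finset (Fin n)) where
  π : List (Fin n)
  par : Fin n → Fin n
  nodup : π.Nodup
  mem_iff : ∀ v, v ∈ π ↔ v ∉ Z
  par_ne_self : ∀ u ∈ π, par u ≠ u
  par_edge : ∀ u ∈ π, A (par u) u ≠ 0
  par_blue : ∀ u ∈ π, par u ∈ Z ∨ (par u ∈ π ∧ π.idxOf (par u) < π.idxOf u)
  others_blue : ∀ u ∈ π, ∀ w, w ≠ par u → w ≠ u → A (par u) w ≠ 0 →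
      (w ∈ Z ∨ (w ∈ π ∧ π.idxOf w < π.idxOf u))
  par_inj : ∀ u ∈ π, ∀ v ∈ π, par u = par v → u = v

/-- One step of the forcing algorithm: `x_u ← (b_{u↑} − A_{u↑,*} x) / A_{u↑,u}`. -/
def forcingStep (A : Matrix (Fin n) (Fin n) F) (par : Fin n → Fin n)
    (b : Fin n → F) (x : Fin n → F) (u : Fin n) : Fin n → F :=
  Function.update x u ((b (par u) - A (par u) ⬝ᵥ x) / A (par u) u)

/-- The forcing algorithm `Forcing(A, Z, b)`: starting from `x = 0`, iterate the forcing
update over the vertices outside `Z` in forcing order. -/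
def Forcing (A : Matrix (Fin n) (Fin n) F) {Z : Finset (Fin n)}
    (fo : ForcingOrder A Z) (b : Fin n → F) : Fin n → F :=
  fo.π.foldl (forcingStep A fo.par b) 0

/-- The map `R(b) = b − A · Forcing(A, Z, b)`. -/
def Rmap (A : Matrix (Fin n) (Fin n) F) {Z : Finset (Fin n)}
    (fo : ForcingOrder A Z) (b : Fin n → F) : Fin n → F :=
  b - A.mulVec (Forcing A fo b)

/-- A vertex is a terminal if it has no forcing child. -/
def IsTerminal {A : Matrix (Fin n) (Fin n) F} {Z : Finset (Fin n)}
    (fo : ForcingOrder A Z) (v : Fin n) : Prop :=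
  ∀ u ∈ fo.π, fo.par u ≠ v

instance {A : Matrix (Fin n) (Fin n) F} {Z : Finset (Fin n)} (fo : ForcingOrder A Z) :
    DecidablePred (IsTerminal fo) := fun v =>
  decidable_of_iff (∀ u ∈ fo.π, fo.par u ≠ v) Iff.rfl

/-- The core matrix `B = (R A)_{T,Z}`: its column indexed by `z ∈ Z` is `(R a_z)_T`,
where `a_z` is the `z`-th column of `A` and `T` is the terminal set. -/
def coreMatrix (A : Matrix (Fin n) (Fin n) F) {Z : Finset (Fin n)}
    (fo : ForcingOrder A Z) :
    Matrix {v // IsTerminal fo v} {v // v ∈ Z} F :=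
  Matrix.of fun t z => Rmap A fo (fun i => A i z.1) t.1

end ForcingAlg


section AuxProof

variable {F : Type*} [Field F] {n : ℕ}

lemma foldl_apply_of_not_mem (A : Matrix (Fin n) (Fin n) F) (par : Fin n → Fin n)
    (b : Fin n → F) (l : List (Fin n)) (x : Fin n → F) {i : Fin n} (hi : i ∉ l) :
    l.foldl (forcingStep A par b) x i = x i := by
  induction l generalizing x with
  | nil => rfl
  | cons u t ih =>
    rw [List.foldl_cons, ih _ (fun h => hi (List.mem_cons_of_mem _ h))]
    exact Function.update_of_ne (fun h => hi (by rw [h]; exact List.mem_cons_self)) _ _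

lemma dot_update (r x : Fin n → F) (u : Fin n) (a : F) :
    r ⬝ᵥ Function.update x u a = r ⬝ᵥ x + r u * (a - x u) := by
  simp only [dotProduct]
  rw [← Finset.sum_erase_add Finset.univ (fun j => r j * Function.update x u a j)
      (Finset.mem_univ u),
      ← Finset.sum_erase_add Finset.univ (fun j => r j * x j) (Finset.mem_univ u)]
  rw [Finset.sum_congr rfl (fun j hj => by
    rw [Function.update_of_ne (Finset.ne_of_mem_erase hj)]), Function.update_self]
  ring

lemma dot_foldl_eq (A : Matrix (Fin n) (Fin n) F) (par : Fin n → Fin n) (b : Fin n → F)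
    (r : Fin n → F) (l : List (Fin n)) (x : Fin n → F) (h : ∀ w ∈ l, r w = 0) :
    r ⬝ᵥ l.foldl (forcingStep A par b) x = r ⬝ᵥ x := by
  induction l generalizing x with
  | nil => rfl
  | cons u t ih =>
    rw [List.foldl_cons, ih _ (fun w hw => h w (List.mem_cons_of_mem _ hw))]
    rw [forcingStep, dot_update, h u (List.mem_cons_self)]
    ring

lemma foldl_add (A : Matrix (Fin n) (Fin n) F) (par : Fin n → Fin n) (b c : Fin n → F)
    (l : List (Fin n)) (x y : Fin n → F) :
    l.foldl (forcingStep A par (b + c)) (x + y)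
      = l.foldl (forcingStep A par b) x + l.foldl (forcingStep A par c) y := by
  induction l generalizing x y with
  | nil => rfl
  | cons u t ih =>
    rw [List.foldl_cons, List.foldl_cons, List.foldl_cons, ← ih]
    congr 1
    funext i
    by_cases hiu : i = u
    · subst hiu
      simp only [forcingStep, Pi.add_apply, Function.update_self, dotProduct_add]
      ring
    · simp only [forcingStep, Pi.add_apply, Function.update_of_ne hiu]

lemma foldl_smul (A : Matrix (Fin n) (Fin n) F) (par : Fin n → Fin n) (s : F)
    (b : Fin n → F) (l : List (Fin n)) (x : Fin n → F) :
    l.foldl (forcingStep A par (s • b)) (s • x)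
      = s • l.foldl (forcingStep A par b) x := by
  induction l generalizing x with
  | nil => rfl
  | cons u t ih =>
    rw [List.foldl_cons, List.foldl_cons, ← ih]
    congr 1
    funext i
    by_cases hiu : i = u
    · subst hiu
      simp only [forcingStep, Pi.smul_apply, Function.update_self, smul_eq_mul]
      rw [show A (par i) ⬝ᵥ (s • x) = s * (A (par i) ⬝ᵥ x) from
        (dotProduct_smul s (A (par i)) x).trans rfl]
      ring
    · simp only [forcingStep, Pi.smul_apply, Function.update_of_ne hiu]

lemma Forcing_add (A : Matrix (Fin n) (Fin n) F) {Z : Finset (Fin n)}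
    (fo : ForcingOrder A Z) (b c : Fin n → F) :
    Forcing A fo (b + c) = Forcing A fo b + Forcing A fo c := by
  have h := foldl_add A fo.par b c fo.π 0 0
  rw [add_zero] at h
  exact h

lemma Forcing_smul (A : Matrix (Fin n) (Fin n) F) {Z : Finset (Fin n)}
    (fo : ForcingOrder A Z) (s : F) (b : Fin n → F) :
    Forcing A fo (s • b) = s • Forcing A fo b := by
  have h := foldl_smul A fo.par s b fo.π 0
  rw [smul_zero] at h
  exact h

/-- `Rmap` as a linear map. -/
def RmapL (A : Matrix (Fin n) (Fin n) F) {Z : Finset (Fin n)} (fo : ForcingOrder A Z) :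
    (Fin n → F) →ₗ[F] (Fin n → F) where
  toFun := Rmap A fo
  map_add' b c := by
    simp only [Rmap, Forcing_add, Matrix.mulVec_add]
    abel
  map_smul' s b := by
    simp only [Rmap, Forcing_smul, Matrix.mulVec_smul, RingHom.id_apply, smul_sub]

lemma Forcing_eq_zero_of_mem (A : Matrix (Fin n) (Fin n) F) {Z : Finset (Fin n)}
    (fo : ForcingOrder A Z) (b : Fin n → F) {i : Fin n} (hi : i ∈ Z) :
    Forcing A fo b i = 0 :=
  foldl_apply_of_not_mem A fo.par b fo.π 0 (fun h => (fo.mem_iff i).mp h hi)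

lemma row_par_eq (A : Matrix (Fin n) (Fin n) F) {Z : Finset (Fin n)} (fo : ForcingOrder A Z)
    (b : Fin n → F) {u : Fin n} (hu : u ∈ fo.π) :
    A (fo.par u) ⬝ᵥ Forcing A fo b = b (fo.par u) := by
  obtain ⟨l₁, l₂, hπ⟩ := List.append_of_mem hu
  have hnd := fo.nodup
  rw [hπ, List.nodup_append'] at hnd
  obtain ⟨hnd₁, hnd₂, hdisj⟩ := hnd
  have hu1 : u ∉ l₁ := fun h => hdisj h (List.mem_cons_self)
  have hu2 : u ∉ l₂ := (List.nodup_cons.mp hnd₂).1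
  have hidxu : fo.π.idxOf u = l₁.length := by
    rw [hπ, List.idxOf_append_of_notMem hu1, List.idxOf_cons_self, add_zero]
  have key : ∀ w ∈ l₂, A (fo.par u) w = 0 := by
    intro w hw
    by_contra hne
    have hwπ : w ∈ fo.π := by
      rw [hπ]; exact List.mem_append_right _ (List.mem_cons_of_mem _ hw)
    have hwZ : w ∉ Z := (fo.mem_iff w).mp hwπ
    have hwu : w ≠ u := fun h => hu2 (h ▸ hw)
    have hidxw : fo.π.idxOf u < fo.π.idxOf w := by
      have hw1 : w ∉ l₁ := fun h => hdisj h (List.mem_cons_of_mem _ hw)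
      rw [hidxu, hπ, List.idxOf_append_of_notMem hw1,
        List.idxOf_cons_ne _ (fun h => hwu h.symm)]
      omega
    have hwpu : w ≠ fo.par u := by
      rintro rfl
      rcases fo.par_blue u hu with h | ⟨_, h⟩
      · exact hwZ h
      · omega
    rcases fo.others_blue u hu w hwpu hwu hne with h | ⟨_, h⟩
    · exact hwZ h
    · omega
  have hF : Forcing A fo b
      = l₂.foldl (forcingStep A fo.par b)
          (forcingStep A fo.par b (l₁.foldl (forcingStep A fo.par b) 0) u) := by
    rw [Forcing, hπ, List.foldl_append, List.foldl_cons]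
  rw [hF, dot_foldl_eq _ _ _ _ _ _ key]
  have hx1u : l₁.foldl (forcingStep A fo.par b) 0 u = 0 :=
    foldl_apply_of_not_mem A fo.par b l₁ 0 hu1
  rw [forcingStep, dot_update, hx1u, sub_zero,
    mul_div_cancel₀ _ (fo.par_edge u hu)]
  ring

lemma Rmap_eq_zero_of_not_terminal (A : Matrix (Fin n) (Fin n) F) {Z : Finset (Fin n)}
    (fo : ForcingOrder A Z) (b : Fin n → F) {v : Fin n} (hv : ¬ IsTerminal fo v) :
    Rmap A fo b v = 0 := by
  simp only [IsTerminal] at hv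
  push_neg at hv
  obtain ⟨u, hu', hpar⟩ := hv
  subst hpar
  have := row_par_eq A fo b hu'
  simp only [Rmap, Pi.sub_apply, Matrix.mulVec, this, sub_self]

lemma card_terminal_eq (A : Matrix (Fin n) (Fin n) F) {Z : Finset (Fin n)}
    (fo : ForcingOrder A Z) :
    Fintype.card {v // IsTerminal fo v} = Fintype.card {v // v ∈ Z} := by
  classical
  have h1 : Fintype.card {v // v ∈ Z} = Z.card := Fintype.card_coe Z
  have hfilter : (Finset.univ.filter (IsTerminal fo))
      = (fo.π.toFinset.image fo.par)ᶜ := by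
    ext v
    simp only [Finset.mem_filter, Finset.mem_univ, true_and, Finset.mem_compl,
      Finset.mem_image, List.mem_toFinset, IsTerminal]
    push_neg
    rfl
  have himg : (fo.π.toFinset.image fo.par).card = fo.π.toFinset.card := by
    apply Finset.card_image_of_injOn
    intro a ha b hb hab
    rw [Finset.mem_coe, List.mem_toFinset] at ha hb
    exact fo.par_inj a ha b hb hab
  have htf : fo.π.toFinset = Zᶜ := by
    ext v
    simp only [List.mem_toFinset, Finset.mem_compl, fo.mem_iff]
  have hZle : Z.card ≤ n := by
    have := Finset.card_le_univ Z
    simpa using this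
  rw [Fintype.card_subtype, hfilter, Finset.card_compl, himg, htf, Finset.card_compl,
    h1, Fintype.card_fin]
  omega

end AuxProof

/-- if `A` is invertible, then the core matrix `B = (R A)_{T,Z}` is
invertible (its multiplication map `F^Z → F^T` is a bijection). -/
theorem stmt17 {F : Type*} [Field F] {n : ℕ} (A : Matrix (Fin n) (Fin n) F)
    (Z : Finset (Fin n)) (hZ : IsZeroForcingSet (adjOf A) ↑Z)
    (fo : ForcingOrder A Z) (hA : IsUnit A) :
    Function.Bijective (coreMatrix A fo).mulVec := by
  classical
  set B := coreMatrix A fo with hB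
  have hker : ∀ y : {v // v ∈ Z} → F, B.mulVec y = 0 → y = 0 := by
    intro y hy
    set yext : Fin n → F := fun i => if h : i ∈ Z then y ⟨i, h⟩ else 0 with hyext
    set b : Fin n → F := A.mulVec yext with hbdef
    have hb : b = ∑ z : {v // v ∈ Z}, y z • (fun i => A i z.1) := by
      funext i
      rw [hbdef]
      simp only [Matrix.mulVec, dotProduct, Finset.sum_apply, Pi.smul_apply,
        smul_eq_mul]
      have h1 : ∑ j : Fin n, A i j * yext j = ∑ j ∈ Z, A i j * yext j :=
        (Finset.sum_subset (Finset.subset_univ Z)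
          (fun j _ hj => by rw [hyext]; simp [dif_neg hj])).symm
      rw [h1, ← Finset.sum_coe_sort Z (fun j => A i j * yext j)]
      refine Finset.sum_congr rfl fun z _ => ?_
      rw [hyext]
      simp only [z.2, dif_pos]
      ring
    have hRb : Rmap A fo b = 0 := by
      funext v
      by_cases hv : IsTerminal fo v
      · have h2 : RmapL A fo b = ∑ z : {v // v ∈ Z}, y z • RmapL A fo (fun i => A i z.1) := by
          rw [hb, map_sum]
          simp only [_root_.map_smul]
        have h3 := congrArg (fun f => f v) h2
        simp only [Finset.sum_apply, Pi.smul_apply, smul_eq_mul] at h3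
        have h4 : Rmap A fo b v = B.mulVec y ⟨v, hv⟩ := by
          rw [show Rmap A fo b v = RmapL A fo b v from rfl, h3]
          simp only [Matrix.mulVec, dotProduct, hB, coreMatrix, Matrix.of_apply]
          exact Finset.sum_congr rfl fun z _ => mul_comm _ _
        rw [h4, hy]
        rfl
      · exact Rmap_eq_zero_of_not_terminal A fo b hv
    have hbeq : b = A.mulVec (Forcing A fo b) := by
      have h5 : b - A.mulVec (Forcing A fo b) = 0 := hRb
      exact sub_eq_zero.mp h5
    have hyF : yext = Forcing A fo b := by
      apply Matrix.mulVec_injective_iff_isUnit.mpr hA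
      rw [← hbdef]
      exact hbeq
    funext z
    have : yext z.1 = 0 := by
      rw [hyF]
      exact Forcing_eq_zero_of_mem A fo b z.2
    rw [hyext] at this
    simpa [z.2] using this
  have hinj : Function.Injective B.mulVec := by
    intro y1 y2 h12
    have h0 : B.mulVec (y1 - y2) = 0 := by
      rw [Matrix.mulVec_sub, h12, sub_self]
    exact sub_eq_zero.mp (hker _ h0)
  have hcoe : ⇑(Matrix.mulVecLin B) = B.mulVec := by
    funext v
    simp [Matrix.mulVecLin]
  have hfr : Module.finrank F ({v // v ∈ Z} → F)
      = Module.finrank F ({v // IsTerminal fo v} → F) := by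
    rw [Module.finrank_fintype_fun_eq_card, Module.finrank_fintype_fun_eq_card,
      card_terminal_eq A fo]
  have hsurj : Function.Surjective (Matrix.mulVecLin B) :=
    (LinearMap.injective_iff_surjective_of_finrank_eq_finrank hfr).mp (hcoe ▸ hinj)
  exact ⟨hinj, hcoe ▸ hsurj⟩
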